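/- Fix N ≥ 2 and let t = ⌊N/2⌋ + 1 be the number of partitions of N with at most 2 parts. Then the characteristic polynomial of M_F^2(N) equals ∏_{k=1}^{t} (x − 4cos²(kπ/(N+2))); in particular, the eigenvalues of M_F^2(N) are exactly 4cos²(kπ/(N+2)) for k = 1, …, t, each simple, and the largest eigenvalue of M_F^2(N) is 4cos²(π/(N+2)). -/

import Mathlib

/-- `AddBox α μ` means that the Young diagram `μ` is obtained from the Young diagram `α`
by adding a single box; equivalently, `α` is obtained from `μ` by removing a box:
the diagram of `α` is contained in the diagram of `μ` and `μ` has exactly one more cell. -/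
def AddBox (α μ : YoungDiagram) : Prop :=
  α ≤ μ ∧ μ.card = α.card + 1

/-- `MoveBox μ ν` (written `μ/ν = □` in the paper): `μ ≠ ν` and some Young diagram can be
obtained from both `μ` and `ν` by removing a single box, i.e. `μ` is obtained from `ν`
by moving a single box. -/
def MoveBox (μ ν : YoungDiagram) : Prop :=
  μ ≠ ν ∧ ∃ α : YoungDiagram, AddBox α μ ∧ AddBox α ν

/-- `nBox μ` is the number `n_μ` of Young diagrams obtained from `μ` by removing a box. -/
noncomputable def nBox (μ : YoungDiagram) : ℕ :=
  Nat.card {α : YoungDiagram // AddBox α μ}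

/-- Partitions of `N` with at most `d` parts, identified with Young diagrams with `N` boxes
whose first column has height at most `d`. -/
abbrev PartLE (N d : ℕ) : Type :=
  {μ : YoungDiagram // μ.card = N ∧ μ.colLen 0 ≤ d}

instance : DecidableEq YoungDiagram := fun μ ν =>
  decidable_of_iff (μ.cells = ν.cells) (YoungDiagram.ext_iff).symm

theorem cell_lt_card {μ : YoungDiagram} {i j : ℕ} (h : (i, j) ∈ μ.cells) :
    i < μ.card ∧ j < μ.card := by
  rw [YoungDiagram.mem_cells] at h
  constructor
  · have hsub : Finset.range (i + 1) ×ˢ ({j} : Finset ℕ) ⊆ μ.cells := by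
      rintro ⟨a, b⟩ hab
      rw [Finset.mem_product, Finset.mem_range, Finset.mem_singleton] at hab
      rw [YoungDiagram.mem_cells]
      obtain ⟨h1, h2⟩ := hab
      subst h2
      exact μ.up_left_mem (Nat.lt_succ_iff.mp h1) le_rfl h
    have := Finset.card_le_card hsub
    simpa [YoungDiagram.card] using this
  · have hsub : ({i} : Finset ℕ) ×ˢ Finset.range (j + 1) ⊆ μ.cells := by
      rintro ⟨a, b⟩ hab
      rw [Finset.mem_product, Finset.mem_range, Finset.mem_singleton] at hab
      rw [YoungDiagram.mem_cells]
      obtain ⟨h1, h2⟩ := hab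
      subst h1
      exact μ.up_left_mem le_rfl (Nat.lt_succ_iff.mp h2) h
    have := Finset.card_le_card hsub
    simpa [YoungDiagram.card] using this

noncomputable instance (N d : ℕ) : Fintype (PartLE N d) := by
  apply Fintype.ofInjective
    (β := {s : Finset (ℕ × ℕ) // s ∈ (Finset.range N ×ˢ Finset.range N).powerset})
    (f := fun μ => ⟨μ.1.cells, by
      rw [Finset.mem_powerset]
      rintro ⟨i, j⟩ hc
      have h := cell_lt_card hc
      rw [μ.2.1] at h
      simp only [Finset.mem_product, Finset.mem_range]
      exact h⟩)
  rintro ⟨μ, hμ⟩ ⟨ν, hν⟩ h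
  simp only [Subtype.mk.injEq] at h ⊢
  exact YoungDiagram.ext h

open scoped Classical in
/-- The Teleportation Matrix `M_F^d(N)`, indexed by the partitions of `N` with at most
`d` parts: the diagonal entry at `μ` is `n_μ`, the off-diagonal entry at `(μ, ν)` is `1`
if `μ/ν = □` and `0` otherwise.  For `d ≥ N` this is the full matrix `M_F(N)`. -/
noncomputable def MF (N d : ℕ) : Matrix (PartLE N d) (PartLE N d) ℝ :=
  fun μ ν => if μ = ν then (nBox μ.1 : ℝ) else if MoveBox μ.1 ν.1 then 1 else 0

-- ## Auxiliary development

/-- Two-row Young diagram with rows `a ≥ b`. -/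
def twoRow (a b : ℕ) (h : b ≤ a) : YoungDiagram where
  cells := ({0} ×ˢ Finset.range a) ∪ ({1} ×ˢ Finset.range b)
  isLowerSet := by
    intro x y hle hx
    obtain ⟨i1, j1⟩ := y
    obtain ⟨i2, j2⟩ := x
    obtain ⟨hi, hj⟩ : i1 ≤ i2 ∧ j1 ≤ j2 := ⟨hle.1, hle.2⟩
    simp only [Finset.coe_union, Finset.coe_product, Finset.coe_singleton, Finset.coe_range,
      Set.mem_union, Set.mem_prod, Set.mem_singleton_iff, Set.mem_Iio] at hx ⊢
    rcases hx with ⟨h2, hj2⟩ | ⟨h2, hj2⟩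
    · subst h2
      exact Or.inl ⟨Nat.le_zero.mp hi, lt_of_le_of_lt hj hj2⟩
    · subst h2
      rcases Nat.lt_or_ge i1 1 with h1 | h1
      · exact Or.inl ⟨Nat.lt_one_iff.mp h1, lt_of_le_of_lt hj (lt_of_lt_of_le hj2 h)⟩
      · exact Or.inr ⟨le_antisymm hi h1, lt_of_le_of_lt hj hj2⟩

theorem mem_twoRow {a b : ℕ} (h : b ≤ a) {i j : ℕ} :
    (i, j) ∈ twoRow a b h ↔ (i = 0 ∧ j < a) ∨ (i = 1 ∧ j < b) := by
  show (i, j) ∈ ({0} ×ˢ Finset.range a) ∪ ({1} ×ˢ Finset.range b) ↔ _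
  simp only [Finset.mem_union, Finset.mem_product, Finset.mem_singleton, Finset.mem_range]

theorem twoRow_card {a b : ℕ} (h : b ≤ a) : (twoRow a b h).card = a + b := by
  show (({0} ×ˢ Finset.range a) ∪ ({1} ×ˢ Finset.range b)).card = a + b
  rw [Finset.card_union_of_disjoint]
  · simp
  · simp only [Finset.disjoint_left, Finset.mem_product, Finset.mem_singleton]
    rintro ⟨i, j⟩ ⟨rfl, -⟩ ⟨h1, -⟩
    exact one_ne_zero h1.symm

theorem twoRow_rowLen0 {a b : ℕ} (h : b ≤ a) : (twoRow a b h).rowLen 0 = a := by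
  apply le_antisymm
  · by_contra hc
    push_neg at hc
    have := (mem_twoRow h).mp (YoungDiagram.mem_iff_lt_rowLen.mpr hc)
    omega
  · by_contra hc
    push_neg at hc
    have := YoungDiagram.mem_iff_lt_rowLen.mp ((mem_twoRow h).mpr (Or.inl ⟨rfl, hc⟩))
    omega

theorem twoRow_rowLen1 {a b : ℕ} (h : b ≤ a) : (twoRow a b h).rowLen 1 = b := by
  apply le_antisymm
  · by_contra hc
    push_neg at hc
    have := (mem_twoRow h).mp (YoungDiagram.mem_iff_lt_rowLen.mpr hc)
    omega
  · by_contra hc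
    push_neg at hc
    have := YoungDiagram.mem_iff_lt_rowLen.mp ((mem_twoRow h).mpr (Or.inr ⟨rfl, hc⟩))
    omega

theorem twoRow_colLen0_le {a b : ℕ} (h : b ≤ a) : (twoRow a b h).colLen 0 ≤ 2 := by
  by_contra hc
  push_neg at hc
  have := (mem_twoRow h).mp (YoungDiagram.mem_iff_lt_colLen.mpr hc)
  omega

theorem eq_twoRow {μ : YoungDiagram} (h : μ.colLen 0 ≤ 2) :
    μ = twoRow (μ.rowLen 0) (μ.rowLen 1) (μ.rowLen_anti 0 1 (by norm_num)) := by
  ext ⟨i, j⟩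
  rw [YoungDiagram.mem_cells, YoungDiagram.mem_cells, mem_twoRow]
  constructor
  · intro hm
    have hi : i < 2 := by
      have : (i, 0) ∈ μ := μ.up_left_mem le_rfl (Nat.zero_le _) hm
      rw [YoungDiagram.mem_iff_lt_colLen] at this
      omega
    rw [YoungDiagram.mem_iff_lt_rowLen] at hm
    interval_cases i
    · exact Or.inl ⟨rfl, hm⟩
    · exact Or.inr ⟨rfl, hm⟩
  · rintro (⟨rfl, hj⟩ | ⟨rfl, hj⟩) <;> rw [YoungDiagram.mem_iff_lt_rowLen] <;> exact hj

theorem twoRow_inj {a b a' b' : ℕ} (h : b ≤ a) (h' : b' ≤ a')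
    (he : twoRow a b h = twoRow a' b' h') : a = a' ∧ b = b' := by
  have h0 := twoRow_rowLen0 h
  have h1 := twoRow_rowLen1 h
  rw [he, twoRow_rowLen0, twoRow_rowLen1] at *
  exact ⟨h0.symm, h1.symm⟩

theorem twoRow_congr {a b a' b' : ℕ} (h : b ≤ a) (h' : b' ≤ a') (ha : a = a') (hb : b = b') :
    twoRow a b h = twoRow a' b' h' := by subst ha; subst hb; rfl

theorem twoRow_le {a b a' b' : ℕ} (h : b ≤ a) (h' : b' ≤ a') (ha : a' ≤ a) (hb : b' ≤ b) :
    twoRow a' b' h' ≤ twoRow a b h := by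
  intro x hx
  obtain ⟨i, j⟩ := x
  rw [mem_twoRow] at hx ⊢
  omega

theorem addBox_twoRow_iff {a b : ℕ} (h : b ≤ a) (α : YoungDiagram) :
    AddBox α (twoRow a b h) ↔
      (∃ h1 : b ≤ a - 1, 1 ≤ a ∧ α = twoRow (a - 1) b h1) ∨
      (1 ≤ b ∧ α = twoRow a (b - 1) (le_trans (Nat.sub_le b 1) h)) := by
  constructor
  · rintro ⟨hle, hcard⟩
    have hcol : α.colLen 0 ≤ 2 := by
      by_contra hc
      push_neg at hc
      have hm : (2, 0) ∈ α := YoungDiagram.mem_iff_lt_colLen.mpr hc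
      have := (mem_twoRow h).mp (hle hm)
      omega
    have hba : α.rowLen 1 ≤ α.rowLen 0 := α.rowLen_anti 0 1 (by norm_num)
    have hα := eq_twoRow hcol
    set a' := α.rowLen 0 with ha'
    set b' := α.rowLen 1 with hb'
    have ha'le : a' ≤ a := by
      by_contra hc
      push_neg at hc
      have hm : (0, a) ∈ α := YoungDiagram.mem_iff_lt_rowLen.mpr hc
      have := (mem_twoRow h).mp (hle hm)
      omega
    have hb'le : b' ≤ b := by
      by_contra hc
      push_neg at hc
      have hm : (1, b) ∈ α := YoungDiagram.mem_iff_lt_rowLen.mpr hc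
      have := (mem_twoRow h).mp (hle hm)
      omega
    have hc : a + b = a' + b' + 1 := by
      rw [← twoRow_card h, ← twoRow_card hba, ← hα, hcard]
    rcases Nat.lt_or_ge b' b with hlt | hge
    · -- b' = b - 1, a' = a
      right
      constructor
      · omega
      · rw [hα]
        exact twoRow_congr _ _ (by omega) (by omega)
    · -- b' = b, a' = a - 1
      left
      have hb1 : b ≤ a - 1 := by omega
      exact ⟨hb1, by omega, by rw [hα]; exact twoRow_congr _ _ (by omega) (by omega)⟩
  · rintro (⟨h1, ha, rfl⟩ | ⟨hb, rfl⟩)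
    · exact ⟨twoRow_le h h1 (Nat.sub_le a 1) le_rfl,
        by rw [twoRow_card, twoRow_card]; omega⟩
    · exact ⟨twoRow_le h _ le_rfl (Nat.sub_le b 1),
        by rw [twoRow_card, twoRow_card]; omega⟩

theorem nBox_twoRow {a b : ℕ} (h : b ≤ a) (ha : 1 ≤ a) :
    nBox (twoRow a b h) = if b = 0 then 1 else if b = a then 1 else 2 := by
  have hcast : nBox (twoRow a b h) = Set.ncard {α : YoungDiagram | AddBox α (twoRow a b h)} := by
    rw [nBox, ← Nat.card_coe_set_eq]
    rfl
  rw [hcast]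
  rcases Nat.eq_zero_or_pos b with rfl | hb
  · rw [if_pos rfl]
    have : {α : YoungDiagram | AddBox α (twoRow a 0 h)} = {twoRow (a - 1) 0 (Nat.zero_le _)} := by
      ext α
      rw [Set.mem_setOf_eq, addBox_twoRow_iff, Set.mem_singleton_iff]
      constructor
      · rintro (⟨h1, -, rfl⟩ | ⟨hb, -⟩)
        · rfl
        · omega
      · rintro rfl
        exact Or.inl ⟨Nat.zero_le _, ha, rfl⟩
    rw [this, Set.ncard_singleton]
  · rw [if_neg (by omega)]
    rcases Nat.lt_or_ge b a with hba | hba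
    · rw [if_neg (by omega)]
      have hb1 : b ≤ a - 1 := by omega
      have : {α : YoungDiagram | AddBox α (twoRow a b h)} =
          {twoRow (a - 1) b hb1, twoRow a (b - 1) (le_trans (Nat.sub_le b 1) h)} := by
        ext α
        rw [Set.mem_setOf_eq, addBox_twoRow_iff, Set.mem_insert_iff, Set.mem_singleton_iff]
        constructor
        · rintro (⟨h1, -, rfl⟩ | ⟨-, rfl⟩)
          · exact Or.inl rfl
          · exact Or.inr rfl
        · rintro (rfl | rfl)
          · exact Or.inl ⟨hb1, ha, rfl⟩
          · exact Or.inr ⟨hb, rfl⟩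
      rw [this, Set.ncard_pair]
      intro he
      have := twoRow_inj _ _ he
      omega
    · have hba' : b = a := le_antisymm h hba
      rw [if_pos hba']
      have : {α : YoungDiagram | AddBox α (twoRow a b h)} =
          {twoRow a (b - 1) (le_trans (Nat.sub_le b 1) h)} := by
        ext α
        rw [Set.mem_setOf_eq, addBox_twoRow_iff, Set.mem_singleton_iff]
        constructor
        · rintro (⟨h1, -, rfl⟩ | ⟨-, rfl⟩)
          · omega
          · rfl
        · rintro rfl
          exact Or.inr ⟨hb, rfl⟩
      rw [this, Set.ncard_singleton]

theorem moveBox_twoRow_iff {N b b' : ℕ} (hb : 2 * b ≤ N) (hb' : 2 * b' ≤ N)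
    (h : b ≤ N - b) (h' : b' ≤ N - b') :
    MoveBox (twoRow (N - b) b h) (twoRow (N - b') b' h') ↔ (b' = b + 1 ∨ b = b' + 1) := by
  constructor
  · rintro ⟨hne, α, hα1, hα2⟩
    rw [addBox_twoRow_iff] at hα1 hα2
    have hbb' : b ≠ b' := by
      intro he
      exact hne (twoRow_congr _ _ (by omega) he)
    rcases hα1 with (⟨h1, ha1, rfl⟩ | ⟨hb1, rfl⟩) <;>
      rcases hα2 with (⟨h2, ha2, he⟩ | ⟨hb2, he⟩) <;>
      · have := twoRow_inj _ _ he
        omega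
  · intro hor
    rcases hor with rfl | rfl
    · -- b' = b + 1; common diagram: (N - b - 1, b)
      refine ⟨?_, twoRow (N - b - 1) b (by omega), ?_, ?_⟩
      · intro he
        have := twoRow_inj _ _ he
        omega
      · rw [addBox_twoRow_iff]
        exact Or.inl ⟨by omega, by omega, twoRow_congr _ _ rfl rfl⟩
      · rw [addBox_twoRow_iff]
        exact Or.inr ⟨by omega, twoRow_congr _ _ (by omega) (by omega)⟩
    · refine ⟨?_, twoRow (N - b' - 1) b' (by omega), ?_, ?_⟩
      · intro he
        have := twoRow_inj _ _ he
        omega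
      · rw [addBox_twoRow_iff]
        exact Or.inr ⟨by omega, twoRow_congr _ _ (by omega) (by omega)⟩
      · rw [addBox_twoRow_iff]
        exact Or.inl ⟨by omega, by omega, twoRow_congr _ _ rfl rfl⟩

-- ## The indexing equivalence

def pLE (N : ℕ) (i : Fin (N / 2 + 1)) : PartLE N 2 :=
  ⟨twoRow (N - i) i (by have := i.isLt; omega),
    by rw [twoRow_card]; have := i.isLt; omega,
    twoRow_colLen0_le _⟩

theorem pLE_bijective (N : ℕ) : Function.Bijective (pLE N) := by
  constructor
  · intro i j hij
    have h' : twoRow (N - i) i (by have := i.isLt; omega) = twoRow (N - j) j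
        (by have := j.isLt; omega) := congrArg Subtype.val hij
    have h := twoRow_inj _ _ h'
    exact Fin.ext h.2
  · rintro ⟨μ, hcard, hcol⟩
    have h1 : μ.rowLen 1 ≤ μ.rowLen 0 := μ.rowLen_anti 0 1 (by norm_num)
    have hμ := eq_twoRow hcol
    have hsum : μ.rowLen 0 + μ.rowLen 1 = N := by
      rw [hμ, twoRow_card] at hcard
      exact hcard
    refine ⟨⟨μ.rowLen 1, by omega⟩, ?_⟩
    apply Subtype.ext
    show twoRow (N - μ.rowLen 1) (μ.rowLen 1) (by omega) = μ
    exact (twoRow_congr _ _ (by omega) rfl).trans hμ.symm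

noncomputable def eP (N : ℕ) : Fin (N / 2 + 1) ≃ PartLE N 2 :=
  Equiv.ofBijective (pLE N) (pLE_bijective N)

/-- The explicit tridiagonal matrix. -/
noncomputable def Ttri (N : ℕ) : Matrix (Fin (N / 2 + 1)) (Fin (N / 2 + 1)) ℝ :=
  fun i j =>
    (if (j : ℕ) = (i : ℕ) then (if (i : ℕ) = 0 then 1 else if 2 * (i : ℕ) = N then 1 else 2)
      else 0)
    + (if (j : ℕ) = (i : ℕ) + 1 then 1 else 0)
    + (if (j : ℕ) + 1 = (i : ℕ) then 1 else 0)

theorem MF_pLE (N : ℕ) (hN : 2 ≤ N) (i j : Fin (N / 2 + 1)) :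
    MF N 2 (pLE N i) (pLE N j) = Ttri N i j := by
  have hi := i.isLt
  have hj := j.isLt
  by_cases hij : i = j
  · subst hij
    rw [MF, if_pos rfl]
    simp only [pLE, Ttri]
    rw [nBox_twoRow _ (by omega)]
    have he : ((i : ℕ) = N - (i : ℕ)) = (2 * (i : ℕ) = N) := propext (by omega)
    simp only [he]
    by_cases h0 : (i : ℕ) = 0
    · simp [h0, (show ¬ 2 * (i:ℕ) = N by omega)]
    · by_cases h2 : 2 * (i : ℕ) = N
      · simp [h0, h2]
      · simp [h0, h2]
  · have hne : pLE N i ≠ pLE N j := fun h => hij ((pLE_bijective N).1 h)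
    rw [MF, if_neg hne, Ttri]
    have hmb : MoveBox (pLE N i).1 (pLE N j).1 ↔ ((j : ℕ) = i + 1 ∨ (i : ℕ) = j + 1) := by
      show MoveBox (twoRow (N - i) i (by have := i.isLt; omega))
        (twoRow (N - j) j (by have := j.isLt; omega)) ↔ _
      rw [moveBox_twoRow_iff (by omega) (by omega)]
    have hijn : ¬ ((j : ℕ) = (i : ℕ)) := fun h => hij (Fin.ext h.symm)
    by_cases ha : (j : ℕ) = (i : ℕ) + 1
    · rw [if_pos (hmb.mpr (Or.inl ha))]
      have hb : ¬ ((j : ℕ) + 1 = (i : ℕ)) := by omega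
      rw [if_neg hijn, if_pos ha, if_neg hb]
      norm_num
    · by_cases hb : (j : ℕ) + 1 = (i : ℕ)
      · rw [if_pos (hmb.mpr (Or.inr hb.symm))]
        rw [if_neg hijn, if_neg ha, if_pos hb]
        norm_num
      · rw [if_neg (fun h => by rcases hmb.mp h with h' | h' <;> omega)]
        rw [if_neg hijn, if_neg ha, if_neg hb]
        norm_num

theorem MF_eq_reindex (N : ℕ) (hN : 2 ≤ N) :
    MF N 2 = (Matrix.reindex (eP N) (eP N)) (Ttri N) := by
  ext μ ν
  rw [Matrix.reindex_apply, Matrix.submatrix_apply, ← MF_pLE N hN]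
  have h1 : pLE N ((eP N).symm μ) = μ := (eP N).apply_symm_apply μ
  have h2 : pLE N ((eP N).symm ν) = ν := (eP N).apply_symm_apply ν
  rw [h1, h2]

theorem eigenset_transfer (N : ℕ) (hN : 2 ≤ N) :
    {lam : ℝ | ∃ v : PartLE N 2 → ℝ, v ≠ 0 ∧ (MF N 2).mulVec v = lam • v} =
      {lam : ℝ | ∃ w : Fin (N / 2 + 1) → ℝ, w ≠ 0 ∧ (Ttri N).mulVec w = lam • w} := by
  have hM := MF_eq_reindex N hN
  ext lam
  simp only [Set.mem_setOf_eq]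
  constructor
  · rintro ⟨v, hv, hmv⟩
    refine ⟨v ∘ (eP N), ?_, ?_⟩
    · intro h
      apply hv
      funext μ
      have := congrFun h ((eP N).symm μ)
      simpa using this
    · rw [hM] at hmv
      rw [Matrix.reindex_apply, Matrix.submatrix_mulVec_equiv] at hmv
      funext i
      have := congrFun hmv ((eP N) i)
      simp only [Function.comp_apply, Pi.smul_apply, smul_eq_mul] at this ⊢
      rw [show (eP N).symm.symm = eP N from rfl] at this
      have hsymm : (eP N).symm ((eP N) i) = i := (eP N).symm_apply_apply i
      rw [hsymm] at this
      convert this using 2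
  · rintro ⟨w, hw, hmw⟩
    refine ⟨w ∘ (eP N).symm, ?_, ?_⟩
    · intro h
      apply hw
      funext i
      have := congrFun h ((eP N) i)
      simpa [(eP N).symm_apply_apply] using this
    · rw [hM, Matrix.reindex_apply, Matrix.submatrix_mulVec_equiv]
      funext μ
      rw [show (eP N).symm.symm = eP N from rfl]
      have : w ∘ (eP N).symm ∘ (eP N) = w := by
        funext i; simp [(eP N).symm_apply_apply]
      rw [show (w ∘ (eP N).symm) ∘ ⇑(eP N) = w from this, hmw]
      simp

-- ## Generic helpers

theorem eval_charpoly' {n : Type*} [DecidableEq n] [Fintype n] (M : Matrix n n ℝ) (x : ℝ) :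
    (M.charpoly).eval x = (x • (1 : Matrix n n ℝ) - M).det := by
  rw [Matrix.charpoly, ← Polynomial.coe_evalRingHom, RingHom.map_det]
  congr 1
  ext i j
  by_cases hij : i = j
  · subst hij
    simp [RingHom.mapMatrix_apply, Matrix.map_apply, Matrix.charmatrix_apply_eq,
      Matrix.one_apply]
  · simp [RingHom.mapMatrix_apply, Matrix.map_apply, Matrix.charmatrix_apply_ne M i j hij,
      Matrix.one_apply, hij]

theorem isRoot_charpoly_of_eigen {n : Type*} [DecidableEq n] [Fintype n]
    (M : Matrix n n ℝ) (x : ℝ) (h : ∃ v : n → ℝ, v ≠ 0 ∧ M.mulVec v = x • v) :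
    M.charpoly.IsRoot x := by
  obtain ⟨v, hv, hMv⟩ := h
  rw [Polynomial.IsRoot, eval_charpoly', ← Matrix.exists_mulVec_eq_zero_iff]
  refine ⟨v, hv, ?_⟩
  rw [Matrix.sub_mulVec, Matrix.smul_mulVec, Matrix.one_mulVec, hMv, sub_self]

theorem monic_eq_of_dvd {p q : Polynomial ℝ} (hp : p.Monic) (hq : q.Monic)
    (hdvd : q ∣ p) (hdeg : p.natDegree ≤ q.natDegree) : p = q := by
  obtain ⟨r, hr⟩ := hdvd
  have hr0 : r ≠ 0 := by
    rintro rfl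
    rw [mul_zero] at hr
    exact hp.ne_zero hr
  have hdq : p.natDegree = q.natDegree + r.natDegree := by
    rw [hr, Polynomial.natDegree_mul hq.ne_zero hr0]
  have hrdeg : r.natDegree = 0 := by omega
  have hrC := Polynomial.eq_C_of_natDegree_eq_zero hrdeg
  have hlc : r.coeff 0 = 1 := by
    have := hp.leadingCoeff
    rw [hr, Polynomial.leadingCoeff_mul, hq.leadingCoeff, one_mul, hrC] at this
    simpa using this
  rw [hr, hrC, hlc, map_one, mul_one]

theorem fin_sum_ite (t : ℕ) (m : ℕ) (f : Fin t → ℝ) :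
    (∑ j : Fin t, if (j : ℕ) = m then f j else 0) = if h : m < t then f ⟨m, h⟩ else 0 := by
  by_cases h : m < t
  · rw [dif_pos h, Finset.sum_eq_single (⟨m, h⟩ : Fin t)]
    · simp
    · intro b _ hb
      rw [if_neg]
      intro hc
      exact hb (Fin.ext (by simpa using hc))
    · intro habs
      exact absurd (Finset.mem_univ _) habs
  · rw [dif_neg h]
    apply Finset.sum_eq_zero
    intro j _
    rw [if_neg]
    intro hc
    exact h (hc ▸ j.isLt)

theorem Ttri_mulVec (N : ℕ) (W : ℕ → ℝ) (i : Fin (N / 2 + 1)) :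
    (Ttri N).mulVec (fun j => W j) i =
      (if (i : ℕ) = 0 then 1 else if 2 * (i : ℕ) = N then 1 else 2) * W i
      + (if (i : ℕ) + 1 < N / 2 + 1 then W ((i : ℕ) + 1) else 0)
      + (if 1 ≤ (i : ℕ) then W ((i : ℕ) - 1) else 0) := by
  rw [Matrix.mulVec, dotProduct]
  simp only [Ttri, add_mul, ite_mul, one_mul, zero_mul]
  rw [Finset.sum_add_distrib, Finset.sum_add_distrib]
  congr 1
  · congr 1
    · -- diagonal term
      rw [fin_sum_ite (N / 2 + 1) (i : ℕ) (fun j =>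
          if (i : ℕ) = 0 then W j else if 2 * (i : ℕ) = N then W j else 2 * W j)]
      rw [dif_pos i.isLt]
    · -- superdiagonal
      rw [fin_sum_ite (N / 2 + 1) ((i : ℕ) + 1) (fun j => W j)]
      by_cases h : (i : ℕ) + 1 < N / 2 + 1
      · rw [dif_pos h, if_pos h]
      · rw [dif_neg h, if_neg h]
  · -- subdiagonal
    by_cases h1 : 1 ≤ (i : ℕ)
    · have he : ∀ j : Fin (N / 2 + 1), ((j : ℕ) + 1 = (i : ℕ)) = ((j : ℕ) = (i : ℕ) - 1) :=
        fun j => propext (by omega)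
      simp only [he]
      rw [fin_sum_ite (N / 2 + 1) ((i : ℕ) - 1) (fun j => W j)]
      rw [dif_pos (by omega : (i : ℕ) - 1 < N / 2 + 1), if_pos h1]
    · rw [if_neg h1]
      apply Finset.sum_eq_zero
      intro j _
      rw [if_neg (by omega)]

noncomputable def lamb (N k : ℕ) : ℝ :=
  4 * Real.cos (((k : ℝ) + 1) * Real.pi / ((N : ℝ) + 2)) ^ 2

theorem Ttri_eigen (N : ℕ) (hN : 2 ≤ N) (k : ℕ) (hk : k < N / 2 + 1) :
    ∃ w : Fin (N / 2 + 1) → ℝ, w ≠ 0 ∧ (Ttri N).mulVec w = lamb N k • w := by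
  set θ : ℝ := ((k : ℝ) + 1) * Real.pi / ((N : ℝ) + 2) with hθdef
  set W : ℕ → ℝ := fun n => Real.sin ((2 * (n : ℝ) + 1) * θ) with hWdef
  have hWn : ∀ n : ℕ, W n = Real.sin ((2 * (n : ℝ) + 1) * θ) := fun n => rfl
  have hπ := Real.pi_pos
  have hN2 : (0:ℝ) < (N : ℝ) + 2 := by positivity
  have hθpos : 0 < θ := by
    rw [hθdef]
    apply div_pos _ hN2
    positivity
  have hθlt : θ < Real.pi := by
    rw [hθdef, div_lt_iff₀ hN2]
    have h1 : (k : ℝ) + 1 < (N : ℝ) + 2 := by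
      have : (k : ℕ) + 1 < N + 2 := by omega
      exact_mod_cast this
    nlinarith
  have hNθ : ((N : ℝ) + 2) * θ = ((k : ℝ) + 1) * Real.pi := by
    rw [hθdef]; field_simp
  have hsinNθ : Real.sin (((N : ℝ) + 2) * θ) = 0 := by
    rw [hNθ]
    have h2 : ((k : ℝ) + 1) = ((k + 1 : ℕ) : ℝ) := by push_cast; ring
    rw [h2, Real.sin_nat_mul_pi]
  have hgen : ∀ x : ℝ, Real.sin (x - 2 * θ) + Real.sin (x + 2 * θ)
      = 2 * Real.cos (2 * θ) * Real.sin x := by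
    intro x; rw [Real.sin_sub, Real.sin_add]; ring
  have hgen1 : ∀ x : ℝ, Real.sin (x - θ) + Real.sin (x + θ)
      = 2 * Real.sin x * Real.cos θ := by
    intro x; rw [Real.sin_sub, Real.sin_add]; ring
  have hlam : lamb N k = 2 + 2 * Real.cos (2 * θ) := by
    rw [lamb, Real.cos_two_mul, ← hθdef]; ring
  have key : ∀ n : ℕ, W n + W (n + 2) = 2 * Real.cos (2 * θ) * W (n + 1) := by
    intro n
    rw [hWn, hWn, hWn]
    push_cast
    rw [show (2 * (n : ℝ) + 1) * θ = ((2 * (n : ℝ) + 3) * θ) - 2 * θ by ring,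
      show (2 * ((n : ℝ) + 2) + 1) * θ = ((2 * (n : ℝ) + 3) * θ) + 2 * θ by ring,
      show (2 * ((n : ℝ) + 1) + 1) * θ = (2 * (n : ℝ) + 3) * θ by ring,
      hgen ((2 * (n : ℝ) + 3) * θ)]
  refine ⟨fun j => W (j : ℕ), ?_, ?_⟩
  · intro h
    have h0 : W 0 = 0 := by
      have := congrFun h ⟨0, by omega⟩
      simpa using this
    have hpos : Real.sin θ > 0 := Real.sin_pos_of_pos_of_lt_pi hθpos hθlt
    rw [hWn] at h0
    norm_num at h0
    linarith
  · funext i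
    rw [Ttri_mulVec]
    rw [Pi.smul_apply, smul_eq_mul, hlam]
    have hi : (i : ℕ) < N / 2 + 1 := i.isLt
    by_cases h0 : (i : ℕ) = 0
    · -- first row
      rw [if_pos h0, if_pos (by omega : (i:ℕ) + 1 < N / 2 + 1), if_neg (by omega), h0]
      have hW0 : W 0 = Real.sin θ := by rw [hWn]; norm_num
      have hW1 : W 1 = Real.sin (3 * θ) := by
        rw [hWn]; norm_num
      have h3 : Real.sin (3 * θ) = 2 * Real.cos (2 * θ) * Real.sin θ + Real.sin θ := by
        have hg := hgen θ
        rw [show θ - 2 * θ = -θ by ring, Real.sin_neg, show θ + 2 * θ = 3 * θ by ring] at hg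
        linarith
      rw [show (0:ℕ) + 1 = 1 from rfl, hW0, hW1, h3]
      ring
    · have h1le : 1 ≤ (i : ℕ) := by omega
      have e1 : (i:ℕ) - 1 + 2 = (i:ℕ) + 1 := by omega
      have e2 : (i:ℕ) - 1 + 1 = (i:ℕ) := by omega
      have hk2 := key ((i:ℕ) - 1)
      rw [e1, e2] at hk2
      by_cases hlast : (i : ℕ) + 1 < N / 2 + 1
      · -- middle row
        rw [if_neg h0, if_neg (by omega : ¬ (2 * (i:ℕ) = N)), if_pos hlast, if_pos h1le]
        linarith
      · rw [if_neg h0, if_neg hlast, if_pos h1le]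
        by_cases hev : 2 * (i:ℕ) = N
        · -- last row, N even
          rw [if_pos hev]
          have hc : 2 * ((i:ℕ):ℝ) = (N:ℝ) := by exact_mod_cast hev
          have hsum0 : W ((i:ℕ) + 1) + W (i:ℕ) = 0 := by
            rw [hWn, hWn]
            push_cast
            rw [show (2 * (((i:ℕ):ℝ) + 1) + 1) * θ = ((N:ℝ) + 2) * θ + θ by
                rw [← hc]; ring,
              show (2 * ((i:ℕ):ℝ) + 1) * θ = ((N:ℝ) + 2) * θ - θ by
                rw [← hc]; ring]
            have hg := hgen1 (((N:ℝ) + 2) * θ)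
            rw [hsinNθ] at hg
            linarith
          linarith
        · -- last row, N odd
          rw [if_neg hev]
          have hodd : 2 * (i:ℕ) + 3 = N + 2 := by omega
          have hc : 2 * ((i:ℕ):ℝ) + 3 = (N:ℝ) + 2 := by exact_mod_cast hodd
          have hWt : W ((i:ℕ) + 1) = 0 := by
            rw [hWn]
            push_cast
            rw [show (2 * (((i:ℕ):ℝ) + 1) + 1) * θ = ((N:ℝ) + 2) * θ by rw [← hc]; ring]
            exact hsinNθ
          rw [hWt] at hk2
          linarith

theorem lamb_strictAnti (N : ℕ) {k1 k2 : ℕ} (hk2 : k2 < N / 2 + 1) (hlt : k1 < k2) :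
    lamb N k2 < lamb N k1 := by
  have hπ := Real.pi_pos
  have hN2 : (0:ℝ) < (N : ℝ) + 2 := by positivity
  set θ1 : ℝ := ((k1 : ℝ) + 1) * Real.pi / ((N : ℝ) + 2) with h1def
  set θ2 : ℝ := ((k2 : ℝ) + 1) * Real.pi / ((N : ℝ) + 2) with h2def
  have hθ1pos : 0 < θ1 := by rw [h1def]; positivity
  have hθ12 : θ1 < θ2 := by
    rw [h1def, h2def, div_lt_div_iff₀ hN2 hN2]
    have : (k1 : ℝ) < (k2 : ℝ) := by exact_mod_cast hlt
    nlinarith [mul_pos (mul_pos (show (0:ℝ) < (k2:ℝ) - (k1:ℝ) by linarith) hπ) hN2]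
  have hc2 : 2 * ((k2 : ℝ) + 1) ≤ (N : ℝ) + 2 := by
    have : 2 * (k2 + 1) ≤ N + 2 := by omega
    exact_mod_cast this
  have hθ2le : θ2 ≤ Real.pi / 2 := by
    rw [h2def, div_le_iff₀ hN2]
    nlinarith
  have hcoslt : Real.cos θ2 < Real.cos θ1 :=
    Real.cos_lt_cos_of_nonneg_of_le_pi hθ1pos.le (by linarith) hθ12
  have hcosnn : (0:ℝ) ≤ Real.cos θ2 :=
    Real.cos_nonneg_of_mem_Icc ⟨by linarith, hθ2le⟩
  rw [lamb, lamb, ← h1def, ← h2def]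
  nlinarith

theorem lamb_le_zero' (N : ℕ) {k : ℕ} (hk : k < N / 2 + 1) : lamb N k ≤ lamb N 0 := by
  rcases Nat.eq_zero_or_pos k with rfl | hpos
  · exact le_refl _
  · exact (lamb_strictAnti N hk hpos).le

theorem Ttri_charpoly (N : ℕ) (hN : 2 ≤ N) :
    (Ttri N).charpoly =
      ∏ k ∈ Finset.range (N / 2 + 1), (Polynomial.X - Polynomial.C (lamb N k)) := by
  set t := N / 2 + 1 with ht
  have hinj : Function.Injective (fun k : Fin t => lamb N (k : ℕ)) := by
    intro a b hab
    by_contra hne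
    rcases Nat.lt_or_ge (a : ℕ) (b : ℕ) with h | h
    · exact absurd hab (by have := lamb_strictAnti N b.isLt h; simp only at this ⊢; linarith)
    · have hba : (b : ℕ) < (a : ℕ) := by
        rcases Nat.lt_or_ge (b : ℕ) (a : ℕ) with h' | h'
        · exact h'
        · exact absurd (Fin.ext (by omega : (a : ℕ) = (b : ℕ))) hne
      exact absurd hab (by have := lamb_strictAnti N a.isLt hba; simp only at this ⊢; linarith)
  have hdvd : (∏ k : Fin t, (Polynomial.X - Polynomial.C (lamb N (k : ℕ)))) ∣
      (Ttri N).charpoly := by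
    apply Fintype.prod_dvd_of_coprime
    · exact Polynomial.pairwise_coprime_X_sub_C hinj
    · intro k
      rw [Polynomial.dvd_iff_isRoot]
      exact isRoot_charpoly_of_eigen _ _ (Ttri_eigen N hN k k.isLt)
  have hprodeq : (∏ k : Fin t, (Polynomial.X - Polynomial.C (lamb N (k : ℕ)))) =
      ∏ k ∈ Finset.range t, (Polynomial.X - Polynomial.C (lamb N k)) :=
    Fin.prod_univ_eq_prod_range (fun k => Polynomial.X - Polynomial.C (lamb N k)) t
  rw [hprodeq] at hdvd
  have hqmonic : (∏ k ∈ Finset.range t,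
      (Polynomial.X - Polynomial.C (lamb N k))).Monic :=
    Polynomial.monic_prod_of_monic _ _ (fun k _ => Polynomial.monic_X_sub_C _)
  apply monic_eq_of_dvd (Matrix.charpoly_monic _) hqmonic hdvd
  rw [Matrix.charpoly_natDegree_eq_dim, Polynomial.natDegree_prod_of_monic _ _
    (fun k _ => Polynomial.monic_X_sub_C _)]
  simp [Polynomial.natDegree_X_sub_C]
  omega

open Polynomial Real in
/-- Fix `N ≥ 2` and let `t = ⌊N/2⌋ + 1` be the number of partitions of `N` with at most two
parts.  The characteristic polynomial of `M_F^2(N)` equals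
`∏_{k=1}^{t} (x - 4cos²(kπ/(N+2)))`; in particular the eigenvalues of `M_F^2(N)` are exactly
the simple eigenvalues `4cos²(kπ/(N+2))`, `k = 1, …, t`, and the largest eigenvalue of
`M_F^2(N)` is `4cos²(π/(N+2))`. -/
theorem charpoly_MF_two (N : ℕ) (hN : 2 ≤ N) :
    (MF N 2).charpoly =
        ∏ k ∈ Finset.range (N / 2 + 1),
          (X - C (4 * Real.cos (((k : ℝ) + 1) * π / ((N : ℝ) + 2)) ^ 2)) ∧
      IsGreatest {lam : ℝ | ∃ v : PartLE N 2 → ℝ, v ≠ 0 ∧ (MF N 2).mulVec v = lam • v}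
        (4 * Real.cos (π / ((N : ℝ) + 2)) ^ 2) := by
  have hchar : (MF N 2).charpoly = ∏ k ∈ Finset.range (N / 2 + 1),
      (X - C (lamb N k)) := by
    rw [MF_eq_reindex N hN, Matrix.charpoly_reindex, Ttri_charpoly N hN]
  have hlamb0 : lamb N 0 = 4 * Real.cos (π / ((N : ℝ) + 2)) ^ 2 := by
    rw [lamb]; norm_num
  constructor
  · rw [hchar]
    exact Finset.prod_congr rfl fun k _ => by rw [lamb]
  · constructor
    · rw [eigenset_transfer N hN]
      obtain ⟨w, hw, hmw⟩ := Ttri_eigen N hN 0 (by omega)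
      rw [hlamb0] at hmw
      exact ⟨w, hw, hmw⟩
    · intro x hx
      rw [eigenset_transfer N hN] at hx
      have hroot : (Ttri N).charpoly.IsRoot x := isRoot_charpoly_of_eigen _ _ hx
      rw [Ttri_charpoly N hN, Polynomial.IsRoot, Polynomial.eval_prod] at hroot
      obtain ⟨k, hk, hk0⟩ := Finset.prod_eq_zero_iff.mp hroot
      rw [Polynomial.eval_sub, Polynomial.eval_X, Polynomial.eval_C, sub_eq_zero] at hk0
      rw [hk0, ← hlamb0]
      exact lamb_le_zero' N (Finset.mem_range.mp hk)
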